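/- arXiv:2002.02173 — 6 statements merged into one kernel-verified Lean document; each statement's English description precedes it below -/
import Mathlib

section
/- Let N, F ≥ 1, and for each i ∈ {1,…,N} let λᵢ, μ_{b,i}, μ_{e,i} be reals with 0 < λᵢ < μ_{b,i} < μ_{e,i}. Let P_r : {1,…,F} → ℝ be nonnegative weights. For a cache-placement vector p ∈ ℝ^{N×F}, define H_e(p) = Σ_{f=1}^{F} P_r(f) · Σ_{i=1}^{N} p(i,f) and D(p) = Σ_{i=1}^{N} (λᵢ / Σ_{j=1}^{N} λⱼ) · [ H_e(p)/(μ_{e,i} − λᵢ H_e(p)) + (1 − H_e(p))/(μ_{b,i} − λᵢ(1 − H_e(p))) ]. Then D is convex on the convex set { p ∈ ℝ^{N×F} : 0 ≤ H_e(p) ≤ 1 }. -/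
open Set Finset

private lemma inv_convexOn_Ioi : ConvexOn ℝ (Set.Ioi (0:ℝ)) (fun x => x⁻¹) := by
  have := convexOn_zpow (𝕜 := ℝ) (-1)
  simpa [zpow_neg_one] using this

private lemma aux_core (a b : ℝ) (hb : 0 < b) (hba : b < a) :
    ConvexOn ℝ (Set.Icc (0:ℝ) 1) (fun x => x / (a - b * x)) := by
  let gmap : ℝ →ᵃ[ℝ] ℝ := AffineMap.const ℝ ℝ a + (-b) • AffineMap.id ℝ ℝ
  have hg : ∀ x, gmap x = a - b * x := by
    intro x
    simp [gmap]
    ring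
  have h1 : ConvexOn ℝ (gmap ⁻¹' Set.Ioi 0) ((fun x => x⁻¹) ∘ gmap) :=
    inv_convexOn_Ioi.comp_affineMap gmap
  have hsub : Set.Icc (0:ℝ) 1 ⊆ gmap ⁻¹' Set.Ioi 0 := by
    intro x ⟨hx0, hx1⟩
    have : b * x ≤ b := by nlinarith
    simp only [Set.mem_preimage, Set.mem_Ioi, hg]
    linarith
  have h2 := h1.subset hsub (convex_Icc 0 1)
  have h3 := (h2.smul (le_of_lt (div_pos (hb.trans hba) hb))).add
    (convexOn_const (-(1/b)) (convex_Icc (0:ℝ) 1))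
  refine h3.congr fun x hx => ?_
  obtain ⟨hx0, hx1⟩ := hx
  have hpos : 0 < a - b * x := by nlinarith
  simp only [Function.comp, Pi.add_apply, hg, smul_eq_mul]
  field_simp
  ring

private lemma aux_second (c b : ℝ) (hb : 0 < b) (hbc : b < c) :
    ConvexOn ℝ (Set.Icc (0:ℝ) 1) (fun H => (1 - H) / (c - b * (1 - H))) := by
  let amap : ℝ →ᵃ[ℝ] ℝ := AffineMap.const ℝ ℝ 1 + (-1 : ℝ) • AffineMap.id ℝ ℝ
  have ha : ∀ x, amap x = 1 - x := by
    intro x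
    simp [amap]
    ring
  have h1 := (aux_core c b hb hbc).comp_affineMap amap
  have hsub : Set.Icc (0:ℝ) 1 ⊆ amap ⁻¹' Set.Icc 0 1 := by
    intro x ⟨hx0, hx1⟩
    simp only [Set.mem_preimage, ha]
    constructor <;> [linarith; linarith]
  have h2 := h1.subset hsub (convex_Icc 0 1)
  refine h2.congr fun x hx => ?_
  simp [Function.comp, ha]

private lemma convexOn_finset_sum {ι : Type*} (t : Finset ι) {s : Set ℝ}
    (hs : Convex ℝ s) {f : ι → ℝ → ℝ} (h : ∀ i ∈ t, ConvexOn ℝ s (f i)) :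
    ConvexOn ℝ s (fun x => ∑ i ∈ t, f i x) := by
  classical
  induction t using Finset.cons_induction with
  | empty => simpa using convexOn_const (0:ℝ) hs
  | cons i t hi ih =>
      simp only [Finset.sum_cons]
      exact (h i (Finset.mem_cons_self i t)).add
        (ih fun j hj => h j (Finset.mem_cons_of_mem hj))

/-- Theorem 1 of the paper: the overall average download time `D`, as a function of the
cache placement vector `p`, is convex on the set where the edge-cache-hit ratio
`He p` lies in `[0,1]`. -/
theorem adt_convex_in_placement
    (N F : ℕ) (hN : 1 ≤ N) (hF : 1 ≤ F)
    (lam mub mue : Fin N → ℝ)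
    (hpos : ∀ i, 0 < lam i) (hlb : ∀ i, lam i < mub i) (hbe : ∀ i, mub i < mue i)
    (Pr : Fin F → ℝ) (hPr : ∀ f, 0 ≤ Pr f)
    (He : (Fin N → Fin F → ℝ) → ℝ)
    (hHe : ∀ p, He p = ∑ f, Pr f * ∑ i, p i f)
    (D : (Fin N → Fin F → ℝ) → ℝ)
    (hD : ∀ p, D p = ∑ i, (lam i / ∑ j, lam j) *
      (He p / (mue i - lam i * He p) + (1 - He p) / (mub i - lam i * (1 - He p)))) :
    ConvexOn ℝ {p : Fin N → Fin F → ℝ | 0 ≤ He p ∧ He p ≤ 1} D := by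
  classical
  set S : ℝ := ∑ j, lam j with hSdef
  have hSpos : 0 < S := by
    have : Nonempty (Fin N) := Fin.pos_iff_nonempty.mp hN
    exact Finset.sum_pos (fun i _ => hpos i) Finset.univ_nonempty
  -- the one-dimensional convex function
  set g : ℝ → ℝ := fun H => ∑ i, (lam i / S) *
      (H / (mue i - lam i * H) + (1 - H) / (mub i - lam i * (1 - H))) with hgdef
  have hg : ConvexOn ℝ (Set.Icc (0:ℝ) 1) g := by
    refine convexOn_finset_sum Finset.univ (convex_Icc 0 1) fun i _ => ?_
    have hterm : ConvexOn ℝ (Set.Icc (0:ℝ) 1)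
        (fun H => H / (mue i - lam i * H) + (1 - H) / (mub i - lam i * (1 - H))) :=
      (aux_core (mue i) (lam i) (hpos i) ((hlb i).trans (hbe i))).add
        (aux_second (mub i) (lam i) (hpos i) (hlb i))
    have hw : 0 ≤ lam i / S := le_of_lt (div_pos (hpos i) hSpos)
    simpa [smul_eq_mul] using hterm.smul hw
  -- He as a linear (hence affine) map
  let L : (Fin N → Fin F → ℝ) →ₗ[ℝ] ℝ :=
    { toFun := fun p => ∑ f, Pr f * ∑ i, p i f
      map_add' := by
        intro x y
        simp [Finset.sum_add_distrib, mul_add]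
      map_smul' := by
        intro c x
        simp [Finset.mul_sum, mul_left_comm] }
  let A : (Fin N → Fin F → ℝ) →ᵃ[ℝ] ℝ := L.toAffineMap
  have hA : ∀ p, A p = He p := by
    intro p
    simp [A, L, hHe p]
  have hcomp := hg.comp_affineMap A
  have hset : {p : Fin N → Fin F → ℝ | 0 ≤ He p ∧ He p ≤ 1} = A ⁻¹' Set.Icc 0 1 := by
    ext p
    simp [hA p, Set.mem_Icc]
  have hfun : D = g ∘ A := by
    funext p
    simp [Function.comp, hD p, hA p, hgdef]
  rw [hset, hfun]
  exact hcomp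
end

section
/- Let λ, μ_b, μ_e be reals with 0 < λ < μ_b < μ_e, and define H_cpl = ((μ_e − √(μ_e μ_b))·√μ_b + λ·√μ_e) / (λ·(√μ_b + √μ_e)). Then H_cpl > 0, μ_e − λ·H_cpl = √μ_e·(μ_e + μ_b − λ)/(√μ_b + √μ_e) > 0, and μ_b − λ·(1 − H_cpl) = √μ_b·(μ_e + μ_b − λ)/(√μ_b + √μ_e) > 0. -/
/-- Positivity of the CPL-optimal edge-cache-hit ratio `H_cpl` and of the two queueing
denominators at `H_cpl`, with their closed forms. -/
theorem hcpl_denominators_positive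
    (lam mub mue : ℝ) (h0 : 0 < lam) (h1 : lam < mub) (h2 : mub < mue)
    (Hcpl : ℝ)
    (hH : Hcpl = ((mue - Real.sqrt (mue * mub)) * Real.sqrt mub + lam * Real.sqrt mue) /
      (lam * (Real.sqrt mub + Real.sqrt mue))) :
    0 < Hcpl ∧
    mue - lam * Hcpl = Real.sqrt mue * (mue + mub - lam) / (Real.sqrt mub + Real.sqrt mue) ∧
    0 < mue - lam * Hcpl ∧
    mub - lam * (1 - Hcpl) = Real.sqrt mub * (mue + mub - lam) / (Real.sqrt mub + Real.sqrt mue) ∧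
    0 < mub - lam * (1 - Hcpl) := by
  have hb : (0:ℝ) < mub := h0.trans h1
  have he : (0:ℝ) < mue := hb.trans h2
  set sb := Real.sqrt mub with hsb
  set se := Real.sqrt mue with hse
  have hsb0 : 0 < sb := Real.sqrt_pos.mpr hb
  have hse0 : 0 < se := Real.sqrt_pos.mpr he
  have hsb2 : sb ^ 2 = mub := Real.sq_sqrt hb.le
  have hse2 : se ^ 2 = mue := Real.sq_sqrt he.le
  have hlt : sb < se := Real.sqrt_lt_sqrt hb.le h2
  have hmul : Real.sqrt (mue * mub) = se * sb := Real.sqrt_mul he.le mub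
  have hS : 0 < sb + se := by linarith
  have hnum : 0 < (mue - Real.sqrt (mue * mub)) * sb + lam * se := by
    rw [hmul]
    nlinarith [mul_pos (mul_pos hse0 hsb0) (sub_pos.mpr hlt), hse2]
  have hpos : 0 < mue + mub - lam := by linarith
  have e1 : mue - lam * Hcpl = se * (mue + mub - lam) / (sb + se) := by
    rw [hH, hmul]
    field_simp
    ring_nf
    linear_combination se*hsb2
  have e2 : mub - lam * (1 - Hcpl) = sb * (mue + mub - lam) / (sb + se) := by
    rw [hH, hmul]
    field_simp
    ring_nf
    linear_combination (-se)*hsb2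
  refine ⟨by rw [hH]; exact div_pos hnum (by positivity), e1, ?_, e2, ?_⟩
  · rw [e1]; positivity
  · rw [e2]; positivity
end

section
/- Let λ, μ_b, μ_e be reals with 0 < λ < μ_b < μ_e, define f(H) = H/(μ_e − λH) + (1−H)/(μ_b − λ(1−H)) and H_cpl = ((μ_e − √(μ_e μ_b))·√μ_b + λ·√μ_e) / (λ·(√μ_b + √μ_e)). Then the derivative of f vanishes at H_cpl; equivalently, μ_e/(μ_e − λ·H_cpl)² = μ_b/(μ_b − λ·(1 − H_cpl))². -/
/-- The derivative of the per-BS average download time `f` vanishes at the CPL-optimal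
edge-cache-hit ratio `H_cpl`; equivalently `μe/(μe − λH_cpl)² = μb/(μb − λ(1−H_cpl))²`. -/
theorem hcpl_is_stationary_point
    (lam mub mue : ℝ) (h0 : 0 < lam) (h1 : lam < mub) (h2 : mub < mue)
    (f : ℝ → ℝ)
    (hf : ∀ H, f H = H / (mue - lam * H) + (1 - H) / (mub - lam * (1 - H)))
    (Hcpl : ℝ)
    (hH : Hcpl = ((mue - Real.sqrt (mue * mub)) * Real.sqrt mub + lam * Real.sqrt mue) /
      (lam * (Real.sqrt mub + Real.sqrt mue))) :
    deriv f Hcpl = 0 ∧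
    mue / (mue - lam * Hcpl) ^ 2 = mub / (mub - lam * (1 - Hcpl)) ^ 2 := by
  have hmub : (0:ℝ) < mub := h0.trans h1
  have hmue : (0:ℝ) < mue := hmub.trans h2
  set a := Real.sqrt mub with ha
  set b := Real.sqrt mue with hb
  have ha0 : 0 < a := Real.sqrt_pos.mpr hmub
  have hb0 : 0 < b := Real.sqrt_pos.mpr hmue
  have ha2 : a ^ 2 = mub := Real.sq_sqrt hmub.le
  have hb2 : b ^ 2 = mue := Real.sq_sqrt hmue.le
  have hab : Real.sqrt (mue * mub) = b * a := Real.sqrt_mul hmue.le mub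
  have hs : 0 < a + b := by linarith
  have hS : 0 < mub + mue - lam := by linarith
  have hne : lam * (a + b) ≠ 0 := by positivity
  have key1 : mue - lam * Hcpl = b * (mub + mue - lam) / (a + b) := by
    rw [hH, hab, ← ha2, ← hb2]
    field_simp
    ring
  have key2 : mub - lam * (1 - Hcpl) = a * (mub + mue - lam) / (a + b) := by
    rw [hH, hab, ← ha2, ← hb2]
    field_simp
    ring
  have hd1 : 0 < mue - lam * Hcpl := by rw [key1]; positivity
  have hd2 : 0 < mub - lam * (1 - Hcpl) := by rw [key2]; positivity
  have heq : mue / (mue - lam * Hcpl) ^ 2 = mub / (mub - lam * (1 - Hcpl)) ^ 2 := by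
    have hS' : a ^ 2 + b ^ 2 - lam ≠ 0 := by rw [ha2, hb2]; linarith
    rw [key1, key2, ← ha2, ← hb2]
    rw [div_eq_div_iff (pow_ne_zero 2 (div_ne_zero (mul_ne_zero hb0.ne' hS') hs.ne'))
      (pow_ne_zero 2 (div_ne_zero (mul_ne_zero ha0.ne' hS') hs.ne'))]
    field_simp
  refine ⟨?_, heq⟩
  have hfe : f = fun H => H / (mue - lam * H) + (1 - H) / (mub - lam * (1 - H)) :=
    funext hf
  have h1' : HasDerivAt (fun H : ℝ => H / (mue - lam * H))
      (mue / (mue - lam * Hcpl) ^ 2) Hcpl := by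
    have hv : HasDerivAt (fun H : ℝ => mue - lam * H) (-lam) Hcpl := by
      simpa using ((hasDerivAt_id Hcpl).const_mul lam).const_sub mue
    have := (hasDerivAt_id Hcpl).div hv hd1.ne'
    refine this.congr_deriv ?_
    simp only [id]
    field_simp
    ring
  have h2' : HasDerivAt (fun H : ℝ => (1 - H) / (mub - lam * (1 - H)))
      (-(mub / (mub - lam * (1 - Hcpl)) ^ 2)) Hcpl := by
    have hu : HasDerivAt (fun H : ℝ => 1 - H) (-1) Hcpl := by
      simpa using (hasDerivAt_id Hcpl).const_sub 1
    have hv : HasDerivAt (fun H : ℝ => mub - lam * (1 - H)) lam Hcpl := by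
      simpa using (hu.const_mul lam).const_sub mub
    have := hu.div hv hd2.ne'
    refine this.congr_deriv ?_
    field_simp
    ring
  have := (h1'.add h2').deriv
  rw [hfe]
  rw [show (fun H => H / (mue - lam * H) + (1 - H) / (mub - lam * (1 - H))) = ((fun H : ℝ => H / (mue - lam * H)) + fun H => (1 - H) / (mub - lam * (1 - H))) from rfl, this, heq]
  ring
end

section
/- Let λ, μ_b, μ_e be reals with 0 < λ < μ_b < μ_e, define f(H) = H/(μ_e − λH) + (1−H)/(μ_b − λ(1−H)) and H_cpl = ((μ_e − √(μ_e μ_b))·√μ_b + λ·√μ_e) / (λ·(√μ_b + √μ_e)). If H_cpl ≤ 1, then f(H_cpl) ≤ f(H) for every H ∈ [0,1]; i.e., H_cpl is a global minimizer of the average download time over the edge-cache-hit ratios [0,1]. -/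
/-- If the CPL-optimal edge-cache-hit ratio `H_cpl` satisfies `H_cpl ≤ 1`, then it is a
global minimizer of the average download time `f` over `[0,1]`. -/
theorem hcpl_global_minimizer
    (lam mub mue : ℝ) (h0 : 0 < lam) (h1 : lam < mub) (h2 : mub < mue)
    (f : ℝ → ℝ)
    (hf : ∀ H, f H = H / (mue - lam * H) + (1 - H) / (mub - lam * (1 - H)))
    (Hcpl : ℝ)
    (hH : Hcpl = ((mue - Real.sqrt (mue * mub)) * Real.sqrt mub + lam * Real.sqrt mue) /
      (lam * (Real.sqrt mub + Real.sqrt mue)))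
    (hle : Hcpl ≤ 1) :
    ∀ H ∈ Set.Icc (0:ℝ) 1, f Hcpl ≤ f H := by
  intro H hHmem
  obtain ⟨hH0, hH1⟩ := hHmem
  set sb := Real.sqrt mub with hsb
  set se := Real.sqrt mue with hse
  have hmub : 0 < mub := h0.trans h1
  have hmue : 0 < mue := hmub.trans h2
  have hsb2 : sb ^ 2 = mub := Real.sq_sqrt hmub.le
  have hse2 : se ^ 2 = mue := Real.sq_sqrt hmue.le
  have hsbp : 0 < sb := Real.sqrt_pos.2 hmub
  have hsep : 0 < se := Real.sqrt_pos.2 hmue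
  have hsqrtmul : Real.sqrt (mue * mub) = se * sb := Real.sqrt_mul hmue.le mub
  have ha : 0 < mue - lam * H := by nlinarith
  have hb : 0 < mub - lam * (1 - H) := by nlinarith
  set S := mue + mub - lam with hS
  have hSpos : 0 < S := by rw [hS]; linarith
  have hden : 0 < sb + se := by linarith
  have haeq : mue - lam * Hcpl = S * se / (sb + se) := by
    rw [hH, hsqrtmul, hS]
    field_simp
    linear_combination se * hsb2
  have hbeq : mub - lam * (1 - Hcpl) = S * sb / (sb + se) := by
    have hsum : (mue - lam * Hcpl) + (mub - lam * (1 - Hcpl)) = S := by rw [hS]; ring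
    have h' : S * se / (sb + se) + S * sb / (sb + se) = S := by
      field_simp
      ring
    linarith [hsum, haeq, h']
  have key : ∀ H', 0 < mue - lam * H' → 0 < mub - lam * (1 - H') →
      f H' = (mue / (mue - lam * H') + mub / (mub - lam * (1 - H')) - 2) / lam := by
    intro H' ha' hb'
    rw [hf]
    rw [eq_div_iff h0.ne', div_add_div _ _ ha'.ne' hb'.ne', div_add_div _ _ ha'.ne' hb'.ne', div_sub' (mul_ne_zero ha'.ne' hb'.ne'), div_mul_eq_mul_div, div_eq_div_iff (mul_ne_zero ha'.ne' hb'.ne') (mul_ne_zero ha'.ne' hb'.ne')]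
    ring
  have hfc : f Hcpl = ((se + sb) ^ 2 / S - 2) / lam := by
    rw [key Hcpl (by rw [haeq]; positivity) (by rw [hbeq]; positivity), haeq, hbeq]
    have h1' : mue / (S * se / (sb + se)) = se * (sb + se) / S := by
      rw [← hse2]; field_simp
    have h2' : mub / (S * sb / (sb + se)) = sb * (sb + se) / S := by
      rw [← hsb2]; field_simp
    rw [h1', h2']
    field_simp
    ring
  have hfH : f H = (mue / (mue - lam * H) + mub / (mub - lam * (1 - H)) - 2) / lam :=
    key H ha hb
  have hcs : (se + sb) ^ 2 / S ≤ mue / (mue - lam * H) + mub / (mub - lam * (1 - H)) := by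
    have hab : (mue - lam * H) + (mub - lam * (1 - H)) = S := by rw [hS]; ring
    rw [div_add_div _ _ (ne_of_gt ha) (ne_of_gt hb), div_le_div_iff₀ hSpos (by positivity)]
    have hexp : (mue * (mub - lam * (1 - H)) + (mue - lam * H) * mub) * S -
        (se + sb) ^ 2 * ((mue - lam * H) * (mub - lam * (1 - H))) =
        (se * (mub - lam * (1 - H)) - sb * (mue - lam * H)) ^ 2 := by
      rw [← hab]
      linear_combination (-(((mue - lam * H) * (mub - lam * (1 - H))) +
          (mub - lam * (1 - H)) ^ 2)) * hse2 +
        (-(((mue - lam * H) * (mub - lam * (1 - H))) + (mue - lam * H) ^ 2)) * hsb2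
    nlinarith [sq_nonneg (se * (mub - lam * (1 - H)) - sb * (mue - lam * H)), hexp]
  rw [hfc, hfH]
  gcongr
end

section
/- Let λ, μ_b, μ_e be reals with 0 < λ < μ_b < μ_e, let H_csl ∈ (0,1], define f(H) = H/(μ_e − λH) + (1−H)/(μ_b − λ(1−H)) and H_cpl = ((μ_e − √(μ_e μ_b))·√μ_b + λ·√μ_e)/(λ·(√μ_b + √μ_e)), and set H* = min{H_csl, H_cpl}. Then f(H*) ≤ f(H) for every H ∈ [0, H_csl]; i.e., the heuristic ECHR H* minimizes the average download time over all edge-cache-hit ratios feasible under the cache-capacity constraint. -/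
set_option maxHeartbeats 1000000 in
/-- The heuristic edge-cache-hit ratio `H* = min{H_csl, H_cpl}` minimizes the average
download time `f` over the feasible ECHRs `[0, H_csl]`. -/
theorem heuristic_echr_minimizes_adt
    (lam mub mue Hcsl : ℝ) (h0 : 0 < lam) (h1 : lam < mub) (h2 : mub < mue)
    (hcsl0 : 0 < Hcsl) (hcsl1 : Hcsl ≤ 1)
    (f : ℝ → ℝ)
    (hf : ∀ H, f H = H / (mue - lam * H) + (1 - H) / (mub - lam * (1 - H)))
    (Hcpl : ℝ)
    (hH : Hcpl = ((mue - Real.sqrt (mue * mub)) * Real.sqrt mub + lam * Real.sqrt mue) /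
      (lam * (Real.sqrt mub + Real.sqrt mue)))
    (Hstar : ℝ) (hstar : Hstar = min Hcsl Hcpl) :
    ∀ H ∈ Set.Icc (0:ℝ) Hcsl, f Hstar ≤ f H := by
  intro H hmem
  obtain ⟨hH0, hHle⟩ := hmem
  have hmub0 : (0:ℝ) < mub := h0.trans h1
  have hmue0 : (0:ℝ) < mue := hmub0.trans h2
  set sb := Real.sqrt mub with hsbdef
  set se := Real.sqrt mue with hsedef
  have hsb2 : sb * sb = mub := Real.mul_self_sqrt hmub0.le
  have hse2 : se * se = mue := Real.mul_self_sqrt hmue0.le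
  have hsb0 : 0 < sb := Real.sqrt_pos.mpr hmub0
  have hse0 : 0 < se := Real.sqrt_pos.mpr hmue0
  have hsblt : sb < se := Real.sqrt_lt_sqrt hmub0.le h2
  have hmulsq : Real.sqrt (mue * mub) = se * sb := Real.sqrt_mul hmue0.le mub
  have hD : lam * (sb + se) ≠ 0 := by positivity
  have hkey : lam * Hcpl * (sb + se) = (mue - se * sb) * sb + lam * se := by
    rw [hH, hmulsq]
    field_simp
  -- Hcpl > 0
  have hcpl_pos : 0 < Hcpl := by
    have hpos : 0 < (mue - se * sb) * sb + lam * se := by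
      nlinarith [hse2, mul_pos (mul_pos hse0 (sub_pos.mpr hsblt)) hsb0, mul_pos h0 hse0]
    nlinarith [mul_pos h0 (add_pos hsb0 hse0)]
  have hK0 : 0 < Hstar := by rw [hstar]; exact lt_min hcsl0 hcpl_pos
  have hKcsl : Hstar ≤ Hcsl := by rw [hstar]; exact min_le_left _ _
  have hK1 : Hstar ≤ 1 := hKcsl.trans hcsl1
  have hH1 : H ≤ 1 := hHle.trans hcsl1
  -- positivity of the four denominators
  have haH : 0 < mue - lam * H := by nlinarith
  have haK : 0 < mue - lam * Hstar := by nlinarith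
  have hbH : 0 < mub - lam * (1 - H) := by nlinarith
  have hbK : 0 < mub - lam * (1 - Hstar) := by nlinarith
  -- p and q identities
  have hp : sb * (mue - lam * H) - se * (mub - lam * (1 - H))
      = lam * (Hcpl - H) * (sb + se) := by
    linear_combination (-1 : ℝ) * hkey + se * hsb2
  have hq : sb * (mue - lam * Hstar) - se * (mub - lam * (1 - Hstar))
      = lam * (Hcpl - Hstar) * (sb + se) := by
    linear_combination (-1 : ℝ) * hkey + se * hsb2
  -- numerator factorization
  have hnumfact : mub * ((mue - lam * H) * (mue - lam * Hstar))
      - mue * ((mub - lam * (1 - H)) * (mub - lam * (1 - Hstar)))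
      = (sb * (mue - lam * Hstar)) * (sb * (mue - lam * H) - se * (mub - lam * (1 - H)))
        + (se * (mub - lam * (1 - H))) * (sb * (mue - lam * Hstar) - se * (mub - lam * (1 - Hstar))) := by
    linear_combination (-((mue - lam * H) * (mue - lam * Hstar))) * hsb2
      + ((mub - lam * (1 - H)) * (mub - lam * (1 - Hstar))) * hse2
  have hnum : 0 ≤ (Hstar - H) * (mub * ((mue - lam * H) * (mue - lam * Hstar))
      - mue * ((mub - lam * (1 - H)) * (mub - lam * (1 - Hstar)))) := by
    rw [hnumfact, hp, hq]
    rcases le_total Hcpl Hcsl with hc | hc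
    · -- Hstar = Hcpl, so the second factor vanishes; get a perfect square
      have hKc : Hstar = Hcpl := by rw [hstar, min_eq_right hc]
      rw [hKc]
      have h1' : 0 ≤ lam * ((sb + se) * (sb * (mue - lam * Hcpl))) := by
        have : 0 < mue - lam * Hcpl := by rw [← hKc]; exact haK
        positivity
      have hX : (Hcpl - H) *
          ((sb * (mue - lam * Hcpl)) * (lam * (Hcpl - H) * (sb + se))
            + (se * (mub - lam * (1 - H))) * (lam * (Hcpl - Hcpl) * (sb + se)))
          = (lam * ((sb + se) * (sb * (mue - lam * Hcpl)))) * (Hcpl - H) ^ 2 := by ring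
      linarith [hX, mul_nonneg h1' (sq_nonneg (Hcpl - H))]
    · -- Hstar = Hcsl ≤ Hcpl : everything is nonnegative
      have hKc : Hstar = Hcsl := by rw [hstar, min_eq_left hc]
      have hHK : 0 ≤ Hstar - H := by linarith
      have hcK : 0 ≤ Hcpl - Hstar := by rw [hKc]; linarith
      have hcH : 0 ≤ Hcpl - H := by linarith
      have t1 : 0 ≤ (sb * (mue - lam * Hstar)) * (lam * (Hcpl - H) * (sb + se)) := by
        apply mul_nonneg (by positivity)
        apply mul_nonneg (mul_nonneg h0.le hcH) (by positivity)
      have t2 : 0 ≤ (se * (mub - lam * (1 - H))) * (lam * (Hcpl - Hstar) * (sb + se)) := by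
        apply mul_nonneg (by positivity)
        apply mul_nonneg (mul_nonneg h0.le hcK) (by positivity)
      exact mul_nonneg hHK (by linarith)
  rw [hf, hf, div_add_div _ _ haK.ne' hbK.ne', div_add_div _ _ haH.ne' hbH.ne',
    div_le_div_iff₀ (by positivity) (by positivity)]
  linarith [hnum]
end

section
/- Let μ_b, μ_e be reals with 0 < μ_b < μ_e, let H_csl ∈ (0,1] satisfy H_csl·(√μ_e + √μ_b) > √μ_e, define H_cpl(λ) = ((μ_e − √(μ_e μ_b))·√μ_b + λ·√μ_e)/(λ·(√μ_b + √μ_e)) and λ* = √(μ_b μ_e)·(√μ_e − √μ_b)/(H_csl·(√μ_e + √μ_b) − √μ_e). Then for every λ with 0 < λ < λ* we have H_cpl(λ) > H_csl, and for every λ > λ* we have H_cpl(λ) < H_csl. -/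
/-- The threshold arrival rate `λ*` separates the two regimes of the heuristic:
for `λ < λ*` the CPL-optimal ECHR exceeds `H_csl` (CSL regime), and for `λ > λ*`
it is below `H_csl` (CPL regime). -/
theorem lambda_star_threshold
    (mub mue Hcsl : ℝ) (h0 : 0 < mub) (h2 : mub < mue)
    (hcsl0 : 0 < Hcsl) (hcsl1 : Hcsl ≤ 1)
    (hgt : Hcsl * (Real.sqrt mue + Real.sqrt mub) > Real.sqrt mue)
    (Hcpl : ℝ → ℝ)
    (hH : ∀ lam, Hcpl lam =
      ((mue - Real.sqrt (mue * mub)) * Real.sqrt mub + lam * Real.sqrt mue) /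
      (lam * (Real.sqrt mub + Real.sqrt mue)))
    (lamstar : ℝ)
    (hls : lamstar = Real.sqrt (mub * mue) * (Real.sqrt mue - Real.sqrt mub) /
      (Hcsl * (Real.sqrt mue + Real.sqrt mub) - Real.sqrt mue)) :
    (∀ lam : ℝ, 0 < lam → lam < lamstar → Hcpl lam > Hcsl) ∧
    (∀ lam : ℝ, lam > lamstar → Hcpl lam < Hcsl) := by
  set a := Real.sqrt mub with ha
  set b := Real.sqrt mue with hb
  have ha0 : 0 < a := Real.sqrt_pos.mpr h0
  have hb0 : 0 < b := Real.sqrt_pos.mpr (h0.trans h2)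
  have hab : a < b := Real.sqrt_lt_sqrt h0.le h2
  have hs1 : Real.sqrt (mue * mub) = b * a := Real.sqrt_mul (h0.trans h2).le mub
  have hs2 : Real.sqrt (mub * mue) = a * b := Real.sqrt_mul h0.le mue
  have hbb : b * b = mue := Real.mul_self_sqrt (h0.trans h2).le
  have hD : 0 < Hcsl * (b + a) - b := by linarith [hgt]
  have hlsD : lamstar * (Hcsl * (b + a) - b) = a * b * (b - a) := by
    rw [hls, hs2, div_mul_cancel₀ _ (ne_of_gt hD)]
  have hlspos : 0 < lamstar := by
    have : 0 < a * b * (b - a) := mul_pos (mul_pos ha0 hb0) (sub_pos.mpr hab)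
    nlinarith
  constructor
  · intro lam hl hls'
    rw [hH lam, gt_iff_lt, lt_div_iff₀ (by positivity)]
    have : lam * (Hcsl * (b + a) - b) < a * b * (b - a) := by
      calc lam * (Hcsl * (b + a) - b) < lamstar * (Hcsl * (b + a) - b) := by
            exact mul_lt_mul_of_pos_right hls' hD
        _ = a * b * (b - a) := hlsD
    rw [hs1, ← hbb]
    nlinarith
  · intro lam hls'
    have hl : 0 < lam := hlspos.trans hls'
    rw [hH lam, div_lt_iff₀ (by positivity)]
    have : a * b * (b - a) < lam * (Hcsl * (b + a) - b) := by
      calc a * b * (b - a) = lamstar * (Hcsl * (b + a) - b) := hlsD.symm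
        _ < lam * (Hcsl * (b + a) - b) := mul_lt_mul_of_pos_right hls' hD
    rw [hs1, ← hbb]
    nlinarith
end
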